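/- (Theorem 2(i), existence) Let A ⊆ ℝⁿ be a bounded closed set with 0 ∈ A ⊆ B₁, Ω := ℝⁿ \ A, and let g : ∂Ω → ℝ be continuous. For any λ ∈ ℝ, there exists a function u, continuous on the closure of Ω and infinity harmonic in Ω, such that u = g on ∂Ω and the function x ↦ u(x) − λ|x| attains both its maximum and its minimum over the closure of Ω on ∂Ω; that is, with c⁺ := max_{∂Ω}(g(x) − λ|x|) and c⁻ := min_{∂Ω}(g(x) − λ|x|), one has c⁻ + λ|x| ≤ u(x) ≤ c⁺ + λ|x| in Ω. -/

import Mathlib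

open Metric Set Filter Bornology Topology
open scoped RealInnerProductSpace

noncomputable section

/-- Euclidean space ℝⁿ. -/
abbrev Euc (n : ℕ) := EuclideanSpace ℝ (Fin n)

/-- Comparison with cones from above (infinity subharmonic). -/
def CmpAbove {n : ℕ} (Ω : Set (Euc n)) (u : Euc n → ℝ) : Prop :=
  ∀ V : Set (Euc n), IsOpen V → IsBounded V → closure V ⊆ Ω →
    ∀ (x₀ : Euc n) (a b : ℝ),
      (∀ x ∈ frontier (V \ {x₀}), u x ≤ a * ‖x - x₀‖ + b) →
      ∀ x ∈ V, u x ≤ a * ‖x - x₀‖ + b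

/-- Comparison with cones from below (infinity superharmonic). -/
def CmpBelow {n : ℕ} (Ω : Set (Euc n)) (u : Euc n → ℝ) : Prop :=
  ∀ V : Set (Euc n), IsOpen V → IsBounded V → closure V ⊆ Ω →
    ∀ (x₀ : Euc n) (a b : ℝ),
      (∀ x ∈ frontier (V \ {x₀}), a * ‖x - x₀‖ + b ≤ u x) →
      ∀ x ∈ V, a * ‖x - x₀‖ + b ≤ u x

/-- Infinity harmonic = comparison with cones from both sides. -/
def InfHarmonic {n : ℕ} (Ω : Set (Euc n)) (u : Euc n → ℝ) : Prop :=
  CmpAbove Ω u ∧ CmpBelow Ω u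

/-- m⁺ = max of u on ∂Ω. -/
def mP {n : ℕ} (Ω : Set (Euc n)) (u : Euc n → ℝ) : ℝ := sSup (u '' frontier Ω)

/-- m⁻ = min of u on ∂Ω. -/
def mM {n : ℕ} (Ω : Set (Euc n)) (u : Euc n → ℝ) : ℝ := sInf (u '' frontier Ω)

/-- S⁺_r := (max(max_{∂B_r} u, m⁺) − m⁺)/r. -/
def SP {n : ℕ} (Ω : Set (Euc n)) (u : Euc n → ℝ) (r : ℝ) : ℝ :=
  (max (sSup (u '' sphere (0 : Euc n) r)) (mP Ω u) - mP Ω u) / r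

/-- S⁻_r := (m⁻ − min(min_{∂B_r} u, m⁻))/r. -/
def SM {n : ℕ} (Ω : Set (Euc n)) (u : Euc n → ℝ) (r : ℝ) : ℝ :=
  (mM Ω u - min (sInf (u '' sphere (0 : Euc n) r)) (mM Ω u)) / r

/-- Lip(u, S) := sup_{x≠y ∈ S} |u(x) − u(y)|/|x − y|. -/
def lipOn {n : ℕ} (u : Euc n → ℝ) (S : Set (Euc n)) : ℝ :=
  sSup ((fun p : Euc n × Euc n => |u p.1 - u p.2| / ‖p.1 - p.2‖) ''
    {p : Euc n × Euc n | p.1 ∈ S ∧ p.2 ∈ S ∧ p.1 ≠ p.2})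

section PerronHelpers
variable {n : ℕ}



lemma closure_diff_singleton {n : ℕ} {v₀ : Euc n} (hv : v₀ ≠ 0) {V : Set (Euc n)}
    (hV : IsOpen V) (p : Euc n) : closure (V \ {p}) = closure V := by
  refine subset_antisymm (closure_mono diff_subset) ?_
  have hsub : V ⊆ closure (V \ {p}) := by
    intro y hy
    by_cases hyp : y = p
    · subst hyp
      rw [_root_.mem_closure_iff]
      intro O hO hyO
      obtain ⟨ε, hε, hball⟩ := Metric.isOpen_iff.1 (hO.inter hV) y ⟨hyO, hy⟩
      refine ⟨y + (ε / (2 * ‖v₀‖)) • v₀, ?_, ?_⟩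
      · have hnv : 0 < ‖v₀‖ := norm_pos_iff.2 hv
        have : ‖(ε / (2 * ‖v₀‖)) • v₀‖ = ε / 2 := by
          rw [norm_smul, Real.norm_eq_abs, abs_of_pos (by positivity)]
          field_simp
        have hmem : y + (ε / (2 * ‖v₀‖)) • v₀ ∈ ball y ε := by
          simp [mem_ball, dist_eq_norm, this]
          linarith
        exact (hball hmem).1
      · refine ⟨(hball ?_).2, ?_⟩
        · have hnv : 0 < ‖v₀‖ := norm_pos_iff.2 hv
          have : ‖(ε / (2 * ‖v₀‖)) • v₀‖ = ε / 2 := by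
            rw [norm_smul, Real.norm_eq_abs, abs_of_pos (by positivity)]
            field_simp
          simp [mem_ball, dist_eq_norm, this]
          linarith
        · simp only [mem_singleton_iff, add_eq_left]
          intro h
          have hnv : 0 < ‖v₀‖ := norm_pos_iff.2 hv
          have := smul_eq_zero.1 h
          rcases this with h' | h'
          · have : ε / (2 * ‖v₀‖) > 0 := by positivity
            linarith [this, h'.le, h'.ge]
          · exact hv h'
    · exact subset_closure ⟨hy, hyp⟩
  calc closure V ⊆ closure (closure (V \ {p})) := closure_mono hsub
    _ = closure (V \ {p}) := closure_closure

lemma frontier_diff_singleton {n : ℕ} {v₀ : Euc n} (hv : v₀ ≠ 0) {V : Set (Euc n)}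
    (hV : IsOpen V) (p : Euc n) :
    frontier (V \ {p}) = closure V \ (V \ {p}) := by
  have hopen : IsOpen (V \ {p}) := hV.sdiff isClosed_singleton
  rw [frontier, hopen.interior_eq, closure_diff_singleton hv hV p]

lemma subset_frontier_diff_singleton {n : ℕ} {v₀ : Euc n} (hv : v₀ ≠ 0) {V : Set (Euc n)}
    (hV : IsOpen V) (p : Euc n) :
    closure V \ V ⊆ frontier (V \ {p}) := by
  rw [frontier_diff_singleton hv hV p]
  exact fun x hx => ⟨hx.1, fun h => hx.2 h.1⟩

lemma vertex_mem_frontier_diff_singleton {n : ℕ} {v₀ : Euc n} (hv : v₀ ≠ 0) {V : Set (Euc n)}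
    (hV : IsOpen V) {p : Euc n} (hp : p ∈ V) : p ∈ frontier (V \ {p}) := by
  rw [frontier_diff_singleton hv hV p]
  exact ⟨subset_closure hp, fun h => h.2 rfl⟩


/-- Core 1-D convexity argument: if `c ≥ 0` and the function
`x ↦ c‖x−y‖ + e‖x−q‖ + f` is ≤ 0 on `closure U \ U`, with `q ∉ U`,
then it is ≤ 0 on `U`. -/
lemma convex_case {n : ℕ} {U : Set (Euc n)} (hUo : IsOpen U) (hUb : IsBounded U)
    (q y : Euc n) (hq : q ∉ U) {c : ℝ} (e f : ℝ) (hc : 0 ≤ c)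
    (hfr : ∀ x ∈ closure U \ U, c * ‖x - y‖ + e * ‖x - q‖ + f ≤ 0) :
    ∀ z ∈ U, c * ‖z - y‖ + e * ‖z - q‖ + f ≤ 0 := by
  intro z hz
  have hzq : z ≠ q := fun h => hq (h ▸ hz)
  set tz : ℝ := ‖z - q‖ with htz
  have htzpos : 0 < tz := by simpa [htz] using sub_ne_zero.2 hzq
  set ω : Euc n := tz⁻¹ • (z - q) with hω
  have hωnorm : ‖ω‖ = 1 := by
    rw [hω, norm_smul, Real.norm_eq_abs, abs_of_pos (inv_pos.2 htzpos)]
    field_simp; exact htz.symm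
  set x : ℝ → Euc n := fun t => q + t • ω with hx
  have hxcont : Continuous x := by continuity
  have hxz : x tz = z := by
    rw [hx]; simp only [hω, smul_smul]
    rw [mul_inv_cancel₀ (ne_of_gt htzpos), one_smul]; abel
  have hxq : ∀ t : ℝ, 0 ≤ t → ‖x t - q‖ = t := by
    intro t ht
    simp only [hx, add_sub_cancel_left, norm_smul, Real.norm_eq_abs, hωnorm, mul_one,
      abs_of_nonneg ht]
  -- the sets of exit times
  set S₁ : Set ℝ := {t | t ∈ Icc 0 tz ∧ x t ∉ U} with hS₁
  have hS₁closed : IsClosed S₁ := by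
    have : S₁ = Icc 0 tz ∩ x ⁻¹' Uᶜ := rfl
    rw [this]; exact isClosed_Icc.inter (hUo.isClosed_compl.preimage hxcont)
  have h0S₁ : (0:ℝ) ∈ S₁ := ⟨⟨le_refl 0, htzpos.le⟩, by simpa [hx] using hq⟩
  have hS₁bdd : BddAbove S₁ := ⟨tz, fun t ht => ht.1.2⟩
  set α := sSup S₁ with hα
  have hαS₁ : α ∈ S₁ := hS₁closed.csSup_mem ⟨0, h0S₁⟩ hS₁bdd
  -- upper exit
  obtain ⟨R, hR⟩ := hUb.exists_norm_le
  set T : ℝ := R + ‖q‖ + tz + 1 with hT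
  have hTout : x T ∉ U := by
    intro hmem
    have h1 : ‖x T‖ ≤ R := hR _ hmem
    have h2 : ‖x T‖ ≥ T - ‖q‖ := by
      have : ‖T • ω‖ = |T| := by rw [norm_smul, hωnorm, mul_one, Real.norm_eq_abs]
      calc ‖x T‖ = ‖q + T • ω‖ := rfl
        _ ≥ ‖T • ω‖ - ‖q‖ := by
            have h3 := norm_sub_le (q + T • ω) q
            simp only [add_sub_cancel_left] at h3
            linarith
        _ ≥ T - ‖q‖ := by rw [this]; have := le_abs_self T; linarith
    have hRnn : 0 ≤ R := (norm_nonneg _).trans (hR _ hz)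
    have : T - ‖q‖ = R + tz + 1 := by rw [hT]; ring
    linarith
  have hTtz : tz ≤ T := by
    have hRnn : 0 ≤ R := (norm_nonneg _).trans (hR _ hz)
    have := norm_nonneg q; rw [hT]; linarith
  set S₂ : Set ℝ := {t | t ∈ Icc tz T ∧ x t ∉ U} with hS₂
  have hS₂closed : IsClosed S₂ := by
    have : S₂ = Icc tz T ∩ x ⁻¹' Uᶜ := rfl
    rw [this]; exact isClosed_Icc.inter (hUo.isClosed_compl.preimage hxcont)
  have hTS₂ : T ∈ S₂ := ⟨⟨hTtz, le_refl _⟩, hTout⟩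
  have hS₂bdd : BddBelow S₂ := ⟨tz, fun t ht => ht.1.1⟩
  set β := sInf S₂ with hβ
  have hβS₂ : β ∈ S₂ := hS₂closed.csInf_mem ⟨T, hTS₂⟩ hS₂bdd
  have hαlt : α < tz := by
    rcases lt_or_eq_of_le hαS₁.1.2 with h | h
    · exact h
    · exfalso; exact hαS₁.2 (h ▸ hxz ▸ hz)
  have hβgt : tz < β := by
    rcases lt_or_eq_of_le hβS₂.1.1 with h | h
    · exact h
    · exfalso; exact hβS₂.2 (h ▸ hxz ▸ hz)
  have hαnn : 0 ≤ α := hαS₁.1.1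
  have hIoo : ∀ t ∈ Ioo α β, x t ∈ U := by
    rintro t ⟨ht1, ht2⟩
    by_cases hcase : t ≤ tz
    · by_contra hout
      exact absurd (le_csSup hS₁bdd (⟨⟨hαnn.trans ht1.le, hcase⟩, hout⟩ : t ∈ S₁)) (not_le.2 ht1)
    · push_neg at hcase
      by_contra hout
      have htT : t ≤ T := le_of_lt (lt_of_lt_of_le ht2 (csInf_le hS₂bdd hTS₂))
      exact absurd (csInf_le hS₂bdd (⟨⟨hcase.le, htT⟩, hout⟩ : t ∈ S₂)) (not_le.2 ht2)
  have hαβ : α < β := hαlt.trans hβgt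
  -- endpoints are in closure U \ U
  have hclosureend : ∀ t ∈ Icc α β, x t ∈ closure U := by
    intro t ht
    have h1 : x t ∈ closure (x '' Ioo α β) := by
      have : t ∈ closure (Ioo α β) := by rw [closure_Ioo (ne_of_lt hαβ)]; exact ht
      have himg := image_closure_subset_closure_image (s := Ioo α β) hxcont
      exact himg (mem_image_of_mem x this)
    refine closure_mono ?_ h1
    rintro w ⟨t', ht', rfl⟩; exact hIoo t' ht'
  have hαfr : x α ∈ closure U \ U :=
    ⟨hclosureend α ⟨le_refl _, hαβ.le⟩, hαS₁.2⟩
  have hβfr : x β ∈ closure U \ U :=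
    ⟨hclosureend β ⟨hαβ.le, le_refl _⟩, hβS₂.2⟩
  have hFα := hfr _ hαfr
  have hFβ := hfr _ hβfr
  rw [hxq α hαnn] at hFα
  rw [hxq β (hαnn.trans hαβ.le)] at hFβ
  -- convex combination
  set s : ℝ := (tz - α) / (β - α) with hs
  have hβα : 0 < β - α := sub_pos.2 hαβ
  have hs0 : 0 ≤ s := div_nonneg (by linarith) hβα.le
  have hs1 : s ≤ 1 := (div_le_one hβα).2 (by linarith)
  have hcombo : (1 - s) * α + s * β = tz := by
    have h' : s * (β - α) = tz - α := by rw [hs]; exact div_mul_cancel₀ _ (ne_of_gt hβα)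
    linear_combination h'
  have hveccombo : z - y = (1 - s) • (x α - y) + s • (x β - y) := by
    rw [← hxz]
    show q + tz • ω - y = (1 - s) • (q + α • ω - y) + s • (q + β • ω - y)
    rw [← hcombo]; module
  have hnormineq : ‖z - y‖ ≤ (1 - s) * ‖x α - y‖ + s * ‖x β - y‖ := by
    rw [hveccombo]
    calc ‖(1 - s) • (x α - y) + s • (x β - y)‖
        ≤ ‖(1 - s) • (x α - y)‖ + ‖s • (x β - y)‖ := norm_add_le _ _
      _ = (1 - s) * ‖x α - y‖ + s * ‖x β - y‖ := by
          rw [norm_smul, norm_smul, Real.norm_eq_abs, Real.norm_eq_abs,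
            abs_of_nonneg (by linarith), abs_of_nonneg hs0]
  have htzeq : ‖z - q‖ = (1 - s) * α + s * β := by rw [← htz, hcombo]
  calc c * ‖z - y‖ + e * ‖z - q‖ + f
      ≤ c * ((1 - s) * ‖x α - y‖ + s * ‖x β - y‖) + e * ((1 - s) * α + s * β) + f := by
        rw [htzeq]
        have := mul_le_mul_of_nonneg_left hnormineq hc
        linarith
    _ = (1 - s) * (c * ‖x α - y‖ + e * α + f) + s * (c * ‖x β - y‖ + e * β + f) := by ring
    _ ≤ (1 - s) * 0 + s * 0 := by
        have h1 : 0 ≤ 1 - s := by linarith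
        exact add_le_add (mul_le_mul_of_nonneg_left hFα h1) (mul_le_mul_of_nonneg_left hFβ hs0)
    _ = 0 := by ring


set_option maxHeartbeats 2000000 in
/-- Comparison of cones: a cone with vertex `x₀` outside `closure V` lies below any cone
(with arbitrary vertex `x₁`) on `V` as soon as it does on `frontier (V \ {x₁})`. -/
theorem cone_comparison {V : Set (Euc n)} (hVo : IsOpen V) (hVb : IsBounded V)
    {x₀ : Euc n} (hx₀ : x₀ ∉ closure V) (x₁ : Euc n) (a b a' b' : ℝ)
    (h : ∀ x ∈ frontier (V \ {x₁}), a * ‖x - x₀‖ + b ≤ a' * ‖x - x₁‖ + b') :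
    ∀ z ∈ V, a * ‖z - x₀‖ + b ≤ a' * ‖z - x₁‖ + b' := by
  intro z hz
  have hzx₀ : z ≠ x₀ := fun hh => hx₀ (hh ▸ subset_closure hz)
  have hv : z - x₀ ≠ 0 := sub_ne_zero.2 hzx₀
  have hfrEq : frontier (V \ {x₁}) = closure V \ (V \ {x₁}) :=
    frontier_diff_singleton hv hVo x₁
  -- the case z = x₁
  by_cases hzx₁ : z = x₁
  · subst hzx₁
    have hmem : z ∈ frontier (V \ {z}) := by
      rw [hfrEq]; exact ⟨subset_closure hz, fun hh => hh.2 rfl⟩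
    have := h z hmem
    simpa using this
  -- now z ∈ U := V \ {x₁}
  set U : Set (Euc n) := V \ {x₁} with hU
  have hUo : IsOpen U := hVo.sdiff isClosed_singleton
  have hUb : IsBounded U := hVb.subset diff_subset
  have hzU : z ∈ U := ⟨hz, hzx₁⟩
  have hfrU : closure U \ U = frontier (V \ {x₁}) := by
    rw [hfrEq, closure_diff_singleton hv hVo x₁]
  have hUsub : U ⊆ V := diff_subset
  have hclU : closure U ⊆ closure V := closure_mono hUsub
  rcases le_or_gt 0 a with ha | ha
  · -- a ≥ 0 : line through x₁
    have hq : x₁ ∉ U := fun hh => hh.2 rfl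
    have key := convex_case hUo hUb x₁ x₀ hq (-a') (b - b') ha
      (by
        intro x hx
        rw [hfrU] at hx
        have := h x hx
        linarith) z hzU
    linarith
  · rcases le_or_gt a' 0 with ha' | ha'
    · -- a < 0, a' ≤ 0 : line through x₀
      have hq : x₀ ∉ U := fun hh => hx₀ (subset_closure (hUsub hh))
      have key := convex_case hUo hUb x₀ x₁ hq (a) (b - b') (by linarith : (0:ℝ) ≤ -a')
        (by
          intro x hx
          rw [hfrU] at hx
          have := h x hx
          linarith) z hzU
      linarith
    · -- a < 0 < a' : convexity / global min argument
      set A₀ : ℝ := -a with hA₀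
      have hA₀pos : 0 < A₀ := by rw [hA₀]; linarith
      set G : Euc n → ℝ := fun x => A₀ * ‖x - x₀‖ + a' * ‖x - x₁‖ with hG
      have hGcont : Continuous G := by fun_prop
      have hhyp : ∀ x ∈ frontier (V \ {x₁}), b - b' ≤ G x := by
        intro x hx; have := h x hx; simp only [hG, hA₀]; linarith
      suffices hsuf : b - b' ≤ G z by
        simp only [hG, hA₀] at hsuf; linarith
      -- x₀ = x₁ special case
      by_cases hd0 : x₀ = x₁
      · subst hd0
        have hq : x₀ ∉ U := fun hh => hx₀ (subset_closure (hUsub hh))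
        have key := convex_case hUo hUb x₀ x₀ hq (-(A₀ + a')) (b - b')
          (le_refl (0:ℝ))
          (by
            intro x hx
            rw [hfrU] at hx
            have := hhyp x hx
            simp only [hG] at this
            linarith) z hzU
        simp only [hG]
        linarith
      have hd : 0 < ‖x₀ - x₁‖ := norm_pos_iff.2 (sub_ne_zero.2 hd0)
      set d : ℝ := ‖x₀ - x₁‖ with hdd
      -- minimum over closure V
      have hKcomp : IsCompact (closure V) := hVb.isCompact_closure
      obtain ⟨zs, hzsK, hzsmin⟩ :=
        hKcomp.exists_isMinOn ⟨z, subset_closure hz⟩ hGcont.continuousOn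
      have hmain : b - b' ≤ G zs := by
        by_cases hzsU : zs ∈ U
        · -- interior minimum: G zs is a global min
          have hglobal : ∀ w : Euc n, G zs ≤ G w := by
            intro w
            by_cases hw : w = zs
            · rw [hw]
            obtain ⟨ε, hε, hball⟩ := Metric.isOpen_iff.1 hVo zs (hUsub hzsU)
            set s : ℝ := min (ε / (2 * ‖w - zs‖)) 1 with hs
            have hwz : 0 < ‖w - zs‖ := norm_pos_iff.2 (sub_ne_zero.2 hw)
            have hspos : 0 < s := lt_min (by positivity) one_pos
            have hs1 : s ≤ 1 := min_le_right _ _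
            set p : Euc n := zs + s • (w - zs) with hp
            have hpV : p ∈ V := by
              apply hball
              simp only [hp, mem_ball, dist_eq_norm, add_sub_cancel_left, norm_smul,
                Real.norm_eq_abs, abs_of_pos hspos]
              calc s * ‖w - zs‖ ≤ (ε / (2 * ‖w - zs‖)) * ‖w - zs‖ := by
                    exact mul_le_mul_of_nonneg_right (min_le_left _ _) hwz.le
                _ = ε / 2 := by field_simp
                _ < ε := by linarith
            have hconv : G p ≤ (1 - s) * G zs + s * G w := by
              have hcv : ∀ y : Euc n, p - y = (1 - s) • (zs - y) + s • (w - y) := by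
                intro y; simp only [hp]; module
              have hn : ∀ y : Euc n, ‖p - y‖ ≤ (1 - s) * ‖zs - y‖ + s * ‖w - y‖ := by
                intro y
                rw [hcv y]
                calc ‖(1 - s) • (zs - y) + s • (w - y)‖
                    ≤ ‖(1 - s) • (zs - y)‖ + ‖s • (w - y)‖ := norm_add_le _ _
                  _ = (1 - s) * ‖zs - y‖ + s * ‖w - y‖ := by
                      rw [norm_smul, norm_smul, Real.norm_eq_abs, Real.norm_eq_abs,
                        abs_of_nonneg (by linarith), abs_of_nonneg hspos.le]
              simp only [hG]
              have h1 := mul_le_mul_of_nonneg_left (hn x₀) hA₀pos.le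
              have h2 := mul_le_mul_of_nonneg_left (hn x₁) ha'.le
              nlinarith [h1, h2]
            have hmin : G zs ≤ G p := hzsmin (subset_closure hpV)
            nlinarith [hconv, hmin, hspos]
          -- trichotomy
          rcases lt_trichotomy A₀ a' with hlt | heq | hgt
          · -- A₀ < a' forces zs = x₁, contradiction
            exfalso
            have h1 : G zs ≤ G x₁ := hglobal x₁
            have h2 : G x₁ = A₀ * d := by
              simp only [hG]
              rw [sub_self, norm_zero, norm_sub_rev x₁ x₀, ← hdd]; ring
            have htri : d ≤ ‖zs - x₀‖ + ‖zs - x₁‖ := by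
              have := norm_sub_le_norm_sub_add_norm_sub x₀ zs x₁
              rw [← hdd] at this
              rw [norm_sub_rev zs x₀]
              linarith
            have h4 : G zs ≥ A₀ * d + (a' - A₀) * ‖zs - x₁‖ := by
              simp only [hG]
              nlinarith [mul_le_mul_of_nonneg_left htri hA₀pos.le]
            have h5 : ‖zs - x₁‖ ≤ 0 := by nlinarith [h1, h2, h4, hlt]
            have : zs = x₁ := by
              have := le_antisymm h5 (norm_nonneg _)
              rwa [norm_eq_zero, sub_eq_zero] at this
            exact hzsU.2 (by rw [this]; rfl)
          · -- A₀ = a' : segment argument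
            -- equality in triangle inequality
            have h1 : G zs ≤ G x₁ := hglobal x₁
            have h2 : G x₁ = A₀ * d := by
              simp only [hG]
              rw [sub_self, norm_zero, norm_sub_rev x₁ x₀, ← hdd]; ring
            have htri : d ≤ ‖zs - x₀‖ + ‖zs - x₁‖ := by
              have := norm_sub_le_norm_sub_add_norm_sub x₀ zs x₁
              rw [← hdd] at this
              rw [norm_sub_rev zs x₀]
              linarith
            have hsumeq : ‖zs - x₀‖ + ‖zs - x₁‖ = d := by
              have hle : G zs = A₀ * (‖zs - x₀‖ + ‖zs - x₁‖) := by
                simp only [hG, ← heq]; ring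
              nlinarith [h1, h2, htri]
            -- march from zs toward x₀
            set P : ℝ → Euc n := fun s => zs + s • (x₀ - zs) with hP
            have hPcont : Continuous P := by fun_prop
            have hPval : ∀ s ∈ Icc (0:ℝ) 1, G (P s) = G zs := by
              intro s hs
              have h0 : P s - x₀ = (1 - s) • (zs - x₀) := by simp only [hP]; module
              have hP0 : ‖P s - x₀‖ = (1 - s) * ‖zs - x₀‖ := by
                rw [h0, norm_smul, Real.norm_eq_abs, abs_of_nonneg (by linarith [hs.2])]
              have hub : ‖P s - x₁‖ ≤ ‖zs - x₁‖ + s * ‖zs - x₀‖ := by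
                have h3 : P s - x₁ = (zs - x₁) + s • (x₀ - zs) := by simp only [hP]; module
                rw [h3]
                calc ‖(zs - x₁) + s • (x₀ - zs)‖ ≤ ‖zs - x₁‖ + ‖s • (x₀ - zs)‖ :=
                      norm_add_le _ _
                  _ = ‖zs - x₁‖ + s * ‖x₀ - zs‖ := by
                      rw [norm_smul, Real.norm_eq_abs, abs_of_nonneg hs.1]
                  _ = ‖zs - x₁‖ + s * ‖zs - x₀‖ := by rw [norm_sub_rev x₀ zs]
              have hlb : d - ‖P s - x₀‖ ≤ ‖P s - x₁‖ := by
                have := norm_sub_le_norm_sub_add_norm_sub x₀ (P s) x₁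
                rw [← hdd] at this
                rw [norm_sub_rev (P s) x₀]
                linarith
              have heq2 : ‖P s - x₁‖ = ‖zs - x₁‖ + s * ‖zs - x₀‖ := by
                have : d - (1 - s) * ‖zs - x₀‖ = ‖zs - x₁‖ + s * ‖zs - x₀‖ := by
                  nlinarith [hsumeq]
                rw [hP0] at hlb
                linarith [hub, hlb]
              simp only [hG, hP0, heq2, ← heq]
              nlinarith [hsumeq]
            -- find exit point
            set SS : Set ℝ := {s | s ∈ Icc (0:ℝ) 1 ∧ P s ∉ U} with hSS
            have hSSclosed : IsClosed SS := by
              have : SS = Icc 0 1 ∩ P ⁻¹' Uᶜ := rfl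
              rw [this]; exact isClosed_Icc.inter (hUo.isClosed_compl.preimage hPcont)
            have h1SS : (1:ℝ) ∈ SS := by
              refine ⟨⟨zero_le_one, le_refl _⟩, ?_⟩
              have : P 1 = x₀ := by simp only [hP]; module
              rw [this]
              exact fun hh => hx₀ (subset_closure (hUsub hh))
            have hSSbdd : BddBelow SS := ⟨0, fun t ht => ht.1.1⟩
            set ss := sInf SS with hss
            have hssSS : ss ∈ SS := hSSclosed.csInf_mem ⟨1, h1SS⟩ hSSbdd
            have hss0 : 0 < ss := by
              rcases lt_or_eq_of_le hssSS.1.1 with hlt' | heq'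
              · exact hlt'
              · exfalso
                have : P 0 = zs := by simp only [hP]; module
                exact hssSS.2 (by rw [← heq', this]; exact hzsU)
            have hIco : ∀ s ∈ Ico (0:ℝ) ss, P s ∈ U := by
              rintro s ⟨hs0', hs1'⟩
              by_contra hout
              have hsle : s ≤ 1 := le_trans hs1'.le hssSS.1.2
              exact absurd (csInf_le hSSbdd (⟨⟨hs0', hsle⟩, hout⟩ : s ∈ SS)) (not_le.2 hs1')
            have hPcl : P ss ∈ closure U := by
              have h1 : ss ∈ closure (Ico 0 ss) := by
                rw [closure_Ico (ne_of_lt hss0)]; exact ⟨hss0.le, le_refl _⟩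
              have himg := image_closure_subset_closure_image (s := Ico 0 ss) hPcont
              have h2 : P ss ∈ closure (P '' Ico 0 ss) := himg (mem_image_of_mem P h1)
              refine closure_mono ?_ h2
              rintro w ⟨t', ht', rfl⟩; exact hIco t' ht'
            have hfrP : P ss ∈ frontier (V \ {x₁}) := by
              rw [← hfrU]; exact ⟨hPcl, hssSS.2⟩
            have := hhyp _ hfrP
            rw [hPval ss hssSS.1] at this
            exact this
          · -- A₀ > a' forces zs = x₀, contradiction
            exfalso
            have h1 : G zs ≤ G x₀ := hglobal x₀
            have h2 : G x₀ = a' * d := by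
              simp only [hG]
              rw [sub_self, norm_zero, ← hdd]
              ring
            have htri : d ≤ ‖zs - x₀‖ + ‖zs - x₁‖ := by
              have := norm_sub_le_norm_sub_add_norm_sub x₀ zs x₁
              rw [← hdd] at this
              rw [norm_sub_rev zs x₀]
              linarith
            have h4 : G zs ≥ a' * d + (A₀ - a') * ‖zs - x₀‖ := by
              simp only [hG]
              nlinarith [mul_le_mul_of_nonneg_left htri ha'.le]
            have h5 : ‖zs - x₀‖ ≤ 0 := by nlinarith [h1, h2, h4, hgt]
            have : zs = x₀ := by
              have := le_antisymm h5 (norm_nonneg _)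
              rwa [norm_eq_zero, sub_eq_zero] at this
            exact hx₀ (this ▸ hzsK)
        · -- zs not in U: zs is a frontier point
          have : zs ∈ frontier (V \ {x₁}) := by
            rw [← hfrU]
            rw [closure_diff_singleton hv hVo x₁]
            exact ⟨hzsK, hzsU⟩
          exact hhyp _ this
      have := hzsmin (subset_closure hz)
      exact le_trans hmain this



/-- A cone with vertex outside `Ω` satisfies comparison with cones from above on `Ω`. -/
lemma cone_cmpAbove {Ω : Set (Euc n)} {p : Euc n} (hp : p ∉ Ω) (a b : ℝ) :
    CmpAbove Ω (fun x => a * ‖x - p‖ + b) := by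
  intro V hVo hVb hVcl x₁ a' b' hhyp z hz
  exact cone_comparison hVo hVb (fun hc => hp (hVcl hc)) x₁ a b a' b' hhyp z hz

/-- A cone with vertex outside `Ω` satisfies comparison with cones from below on `Ω`. -/
lemma cone_cmpBelow {Ω : Set (Euc n)} {p : Euc n} (hp : p ∉ Ω) (a b : ℝ) :
    CmpBelow Ω (fun x => a * ‖x - p‖ + b) := by
  intro V hVo hVb hVcl x₁ a' b' hhyp z hz
  have := cone_comparison hVo hVb (fun hc => hp (hVcl hc)) x₁ (-a) (-b) (-a') (-b')
    (by intro x hx; have := hhyp x hx; simp only [] at this ⊢; linarith) z hz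
  simp only []
  linarith

/-- CmpAbove only depends on the values on Ω. -/
lemma CmpAbove.congr {Ω : Set (Euc n)} {u v : Euc n → ℝ} (h : CmpAbove Ω u)
    (he : ∀ x ∈ Ω, v x = u x) : CmpAbove Ω v := by
  intro V hVo hVb hVcl x₀ a b hhyp z hz
  have hfr : frontier (V \ {x₀}) ⊆ Ω := by
    intro x hx
    exact hVcl (closure_mono (diff_subset) hx.1)
  rw [he z (hVcl (subset_closure hz))]
  exact h V hVo hVb hVcl x₀ a b
    (fun x hx => by rw [← he x (hfr hx)]; exact hhyp x hx) z hz

lemma CmpBelow.congr {Ω : Set (Euc n)} {u v : Euc n → ℝ} (h : CmpBelow Ω u)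
    (he : ∀ x ∈ Ω, v x = u x) : CmpBelow Ω v := by
  intro V hVo hVb hVcl x₀ a b hhyp z hz
  have hfr : frontier (V \ {x₀}) ⊆ Ω := by
    intro x hx
    exact hVcl (closure_mono (diff_subset) hx.1)
  rw [he z (hVcl (subset_closure hz))]
  exact h V hVo hVb hVcl x₀ a b
    (fun x hx => by rw [← he x (hfr hx)]; exact hhyp x hx) z hz

/-- Pointwise sup of a family satisfying CmpAbove (with pointwise bounds) satisfies CmpAbove. -/
lemma cmpAbove_sSup {Ω : Set (Euc n)} {F : Set (Euc n → ℝ)} (hne : F.Nonempty)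
    (hF : ∀ v ∈ F, CmpAbove Ω v) (Ψ : Euc n → ℝ) (hbd : ∀ v ∈ F, ∀ x, v x ≤ Ψ x) :
    CmpAbove Ω (fun x => sSup ((fun v : Euc n → ℝ => v x) '' F)) := by
  intro V hVo hVb hVcl x₀ a b hhyp z hz
  have hbdd : ∀ x : Euc n, BddAbove ((fun v : Euc n → ℝ => v x) '' F) := by
    intro x
    exact ⟨Ψ x, by rintro r ⟨v, hv, rfl⟩; exact hbd v hv x⟩
  apply csSup_le (hne.image _)
  rintro r ⟨v, hv, rfl⟩
  refine hF v hv V hVo hVb hVcl x₀ a b ?_ z hz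
  intro x hx
  exact le_trans (le_csSup (hbdd x) (mem_image_of_mem _ hv)) (hhyp x hx)

/-- Pointwise inf of a family satisfying CmpBelow (with pointwise bounds) satisfies CmpBelow. -/
lemma cmpBelow_sInf {Ω : Set (Euc n)} {F : Set (Euc n → ℝ)} (hne : F.Nonempty)
    (hF : ∀ v ∈ F, CmpBelow Ω v) (Φ : Euc n → ℝ) (hbd : ∀ v ∈ F, ∀ x, Φ x ≤ v x) :
    CmpBelow Ω (fun x => sInf ((fun v : Euc n → ℝ => v x) '' F)) := by
  intro V hVo hVb hVcl x₀ a b hhyp z hz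
  have hbdd : ∀ x : Euc n, BddBelow ((fun v : Euc n → ℝ => v x) '' F) := by
    intro x
    exact ⟨Φ x, by rintro r ⟨v, hv, rfl⟩; exact hbd v hv x⟩
  apply le_csInf (hne.image _)
  rintro r ⟨v, hv, rfl⟩
  refine hF v hv V hVo hVb hVcl x₀ a b ?_ z hz
  intro x hx
  exact le_trans (hhyp x hx) (csInf_le (hbdd x) (mem_image_of_mem _ hv))

/-- The Perron envelope is continuous on Ω. -/
lemma perron_continuousOn {Ω : Set (Euc n)} (hΩ : IsOpen Ω) {v₀ : Euc n} (hv₀ : v₀ ≠ 0)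
    {F : Set (Euc n → ℝ)} (hF : ∀ v ∈ F, CmpAbove Ω v) {Ψ w₀ : Euc n → ℝ}
    (hbd : ∀ v ∈ F, ∀ x, v x ≤ Ψ x) (hw₀ : w₀ ∈ F) {W₁ : Euc n → ℝ}
    (hΨW : ∀ x, Ψ x ≤ W₁ x) (hW₁c : Continuous W₁) (hw₀c : Continuous w₀) :
    ContinuousOn (fun x => sSup ((fun v : Euc n → ℝ => v x) '' F)) Ω := by
  set u₀ : Euc n → ℝ := fun x => sSup ((fun v : Euc n → ℝ => v x) '' F) with hu₀
  have hbdd : ∀ x : Euc n, BddAbove ((fun v : Euc n → ℝ => v x) '' F) :=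
    fun x => ⟨Ψ x, by rintro r ⟨v, hv, rfl⟩; exact hbd v hv x⟩
  have hlow : ∀ x, w₀ x ≤ u₀ x := fun x => le_csSup (hbdd x) (mem_image_of_mem _ hw₀)
  have hupp : ∀ x, u₀ x ≤ Ψ x := fun x => csSup_le (⟨w₀ x, mem_image_of_mem _ hw₀⟩)
    (by rintro r ⟨v, hv, rfl⟩; exact hbd v hv x)
  intro y hy
  obtain ⟨ε, hε, hball⟩ := Metric.isOpen_iff.1 hΩ y hy
  set ρ : ℝ := ε / 4 with hρ
  have hρpos : 0 < ρ := by positivity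
  have hball3 : closedBall y (3 * ρ) ⊆ Ω := by
    refine subset_trans ?_ hball
    intro w hw
    rw [mem_closedBall] at hw
    rw [mem_ball]
    calc dist w y ≤ 3 * ρ := hw
      _ < ε := by rw [hρ]; linarith
  -- bounds on the large ball
  obtain ⟨C₁, hC₁⟩ : ∃ C₁, ∀ x ∈ closedBall y (3 * ρ), Ψ x ≤ C₁ := by
    obtain ⟨C₁, hC₁⟩ := (isCompact_closedBall y (3 * ρ)).bddAbove_image hW₁c.continuousOn
    exact ⟨C₁, fun x hx => le_trans (hΨW x) (hC₁ (mem_image_of_mem _ hx))⟩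
  obtain ⟨C₀, hC₀⟩ : ∃ C₀, ∀ x ∈ closedBall y (3 * ρ), C₀ ≤ w₀ x := by
    obtain ⟨C₀, hC₀⟩ := (isCompact_closedBall y (3 * ρ)).bddBelow_image hw₀c.continuousOn
    exact ⟨C₀, fun x hx => hC₀ (mem_image_of_mem _ hx)⟩
  set L : ℝ := (C₁ - C₀) / (2 * ρ) with hL
  have hC₀C₁ : C₀ ≤ C₁ := by
    have h1 := hC₀ y (mem_closedBall_self (by linarith))
    have h2 := hC₁ y (mem_closedBall_self (by linarith))
    have := (hlow y).trans (hupp y)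
    linarith
  have hLnn : 0 ≤ L := div_nonneg (by linarith) (by linarith)
  -- one-sided estimate
  have key : ∀ p ∈ closedBall y ρ, ∀ q ∈ ball p (2 * ρ),
      u₀ q ≤ u₀ p + L * ‖q - p‖ := by
    intro p hp q hq
    have hclV : closure (ball p (2 * ρ)) ⊆ closedBall y (3 * ρ) := by
      rw [closure_ball p (by positivity : (2:ℝ) * ρ ≠ 0)]
      intro w hw
      rw [mem_closedBall] at hw hp ⊢
      calc dist w y ≤ dist w p + dist p y := dist_triangle _ _ _
        _ ≤ 2 * ρ + ρ := add_le_add hw hp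
        _ = 3 * ρ := by ring
    have hclVΩ : closure (ball p (2 * ρ)) ⊆ Ω := hclV.trans hball3
    have hvest : ∀ v ∈ F, v q ≤ v p + (C₁ - v p) / (2 * ρ) * ‖q - p‖ := by
      intro v hv
      have happ := hF v hv (ball p (2 * ρ)) isOpen_ball isBounded_ball hclVΩ p
        ((C₁ - v p) / (2 * ρ)) (v p) ?_ q hq
      · linarith [happ]
      · intro x hx
        rw [frontier_diff_singleton hv₀ isOpen_ball p] at hx
        obtain ⟨hx1, hx2⟩ := hx
        by_cases hxp : x = p
        · subst hxp; simp
        · have hxV : x ∉ ball p (2 * ρ) := fun hc => hx2 ⟨hc, hxp⟩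
          have hxub : dist x p ≤ 2 * ρ := by
            have := hclV hx1
            rw [closure_ball p (by positivity : (2:ℝ) * ρ ≠ 0)] at hx1
            exact mem_closedBall.1 hx1
          have hxlb : 2 * ρ ≤ dist x p := by
            by_contra hcc
            exact hxV (mem_ball.2 (by linarith))
          have hxeq : ‖x - p‖ = 2 * ρ := by
            rw [← dist_eq_norm]; linarith
          have hvx : v x ≤ C₁ := le_trans (hbd v hv x) (hC₁ x (hclV hx1))
          rw [hxeq]
          rw [div_mul_cancel₀ _ (by positivity : (2:ℝ) * ρ ≠ 0)]
          linarith
    -- pass to sup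
    have ht : ‖q - p‖ / (2 * ρ) < 1 := by
      rw [div_lt_one (by positivity)]
      rw [mem_ball, dist_eq_norm] at hq; exact hq
    have htnn : 0 ≤ ‖q - p‖ / (2 * ρ) := by positivity
    have hsup : u₀ q ≤ u₀ p + (C₁ - u₀ p) * (‖q - p‖ / (2 * ρ)) := by
      have hrbd : ∀ r ∈ (fun v : Euc n → ℝ => v q) '' F,
          r ≤ u₀ p + (C₁ - u₀ p) * (‖q - p‖ / (2 * ρ)) := by
        rintro r ⟨v, hv, rfl⟩
        have h1 := hvest v hv
        have hvp : v p ≤ u₀ p := le_csSup (hbdd p) (mem_image_of_mem _ hv)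
        have hexp : v p + (C₁ - v p) / (2 * ρ) * ‖q - p‖
            = v p * (1 - ‖q - p‖ / (2 * ρ)) + C₁ * (‖q - p‖ / (2 * ρ)) := by
          field_simp; ring
        rw [hexp] at h1
        have h2 : v p * (1 - ‖q - p‖ / (2 * ρ)) ≤ u₀ p * (1 - ‖q - p‖ / (2 * ρ)) :=
          mul_le_mul_of_nonneg_right hvp (by linarith)
        have h3 : u₀ p * (1 - ‖q - p‖ / (2 * ρ)) + C₁ * (‖q - p‖ / (2 * ρ))
            = u₀ p + (C₁ - u₀ p) * (‖q - p‖ / (2 * ρ)) := by ring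
        linarith
      exact csSup_le (⟨w₀ q, mem_image_of_mem _ hw₀⟩) hrbd
    have hu₀p : C₀ ≤ u₀ p := le_trans (hC₀ p (by
      rw [mem_closedBall] at hp ⊢; linarith [hp])) (hlow p)
    have h4 : (C₁ - u₀ p) * (‖q - p‖ / (2 * ρ)) ≤ (C₁ - C₀) * (‖q - p‖ / (2 * ρ)) :=
      mul_le_mul_of_nonneg_right (by linarith) htnn
    have h5 : (C₁ - C₀) * (‖q - p‖ / (2 * ρ)) = L * ‖q - p‖ := by
      rw [hL]; field_simp
    linarith
  -- two-sided estimate gives continuity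
  apply ContinuousAt.continuousWithinAt
  rw [Metric.continuousAt_iff]
  intro ε' hε'
  refine ⟨min ρ (ε' / (L + 1)), lt_min hρpos (by positivity), ?_⟩
  intro x hx
  have hx1 : dist x y < ρ := lt_of_lt_of_le hx (min_le_left _ _)
  have hx2 : dist x y < ε' / (L + 1) := lt_of_lt_of_le hx (min_le_right _ _)
  have hyc : y ∈ closedBall y ρ := mem_closedBall_self hρpos.le
  have hxc : x ∈ closedBall y ρ := by rw [mem_closedBall]; linarith
  have hxb : x ∈ ball y (2 * ρ) := by rw [mem_ball]; linarith
  have hyb : y ∈ ball x (2 * ρ) := by rw [mem_ball, dist_comm]; linarith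
  have e1 := key y hyc x hxb
  have e2 := key x hxc y hyb
  rw [Real.dist_eq]
  have hnorm : ‖x - y‖ = dist x y := by rw [dist_eq_norm]
  have hnorm2 : ‖y - x‖ = dist x y := by rw [← dist_eq_norm, dist_comm]
  rw [hnorm] at e1; rw [hnorm2] at e2
  have habs : |u₀ x - u₀ y| ≤ L * dist x y := abs_le.2 ⟨by linarith, by linarith⟩
  calc |u₀ x - u₀ y| ≤ L * dist x y := habs
    _ ≤ (L + 1) * dist x y := by nlinarith [dist_nonneg (x := x) (y := y)]
    _ < (L + 1) * (ε' / (L + 1)) := by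
        apply mul_lt_mul_of_pos_left hx2 (by linarith)
    _ = ε' := by field_simp

/-- The Perron envelope over the family `{v : CmpAbove, v ≤ Ψ}` satisfies comparison with
cones from below, provided `Ψ` is a continuous supersolution. -/
lemma perron_cmpBelow {Ω : Set (Euc n)} (hΩ : IsOpen Ω) {v₀ : Euc n} (hv₀ : v₀ ≠ 0)
    {Ψ w₀ : Euc n → ℝ} (hΨb : CmpBelow Ω Ψ) {W₁ : Euc n → ℝ}
    (hΨW : ∀ x, Ψ x ≤ W₁ x) (hW₁c : Continuous W₁) (hw₀c : Continuous w₀)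
    (hw₀a : CmpAbove Ω w₀) (hw₀Ψ : ∀ x, w₀ x ≤ Ψ x) :
    CmpBelow Ω (fun x =>
      sSup ((fun v : Euc n → ℝ => v x) '' {v | CmpAbove Ω v ∧ ∀ y, v y ≤ Ψ y})) := by
  classical
  set F : Set (Euc n → ℝ) := {v | CmpAbove Ω v ∧ ∀ y, v y ≤ Ψ y} with hFdef
  have hw₀F : w₀ ∈ F := ⟨hw₀a, hw₀Ψ⟩
  have hFne : F.Nonempty := ⟨w₀, hw₀F⟩
  have hFa : ∀ v ∈ F, CmpAbove Ω v := fun v hv => hv.1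
  have hFbd : ∀ v ∈ F, ∀ x, v x ≤ Ψ x := fun v hv => hv.2
  set u₀ : Euc n → ℝ := fun x => sSup ((fun v : Euc n → ℝ => v x) '' F) with hu₀def
  have hbdd : ∀ x : Euc n, BddAbove ((fun v : Euc n → ℝ => v x) '' F) :=
    fun x => ⟨Ψ x, by rintro r ⟨v, hv, rfl⟩; exact hFbd v hv x⟩
  have hupp : ∀ x, u₀ x ≤ Ψ x := fun x => csSup_le (hFne.image _)
    (by rintro r ⟨v, hv, rfl⟩; exact hFbd v hv x)
  have hvle : ∀ v ∈ F, ∀ x, v x ≤ u₀ x :=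
    fun v hv x => le_csSup (hbdd x) (mem_image_of_mem _ hv)
  have hu₀a : CmpAbove Ω u₀ := cmpAbove_sSup hFne hFa Ψ hFbd
  have hu₀c : ContinuousOn u₀ Ω := perron_continuousOn hΩ hv₀ hFa hFbd hw₀F hΨW hW₁c hw₀c
  -- main argument
  intro V hVo hVb hVcl x₀ a b hhyp z hz
  by_contra hcon
  push_neg at hcon
  set C : Euc n → ℝ := fun x => a * ‖x - x₀‖ + b with hC
  have hCc : Continuous C := by fun_prop
  set δ : ℝ := (C z - u₀ z) / 2 with hδ
  have hδpos : 0 < δ := by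
    simp only [hδ]
    linarith
  have hVΩ : V ⊆ Ω := fun x hx => hVcl (subset_closure hx)
  set O : Set (Euc n) := {x | x ∈ V ∧ u₀ x < C x - δ} with hO
  have hzO : z ∈ O := ⟨hz, by simp only [hδ]; linarith⟩
  have hOsubV : O ⊆ V := fun x hx => hx.1
  have hOopen : IsOpen O := by
    rw [isOpen_iff_mem_nhds]
    intro x hx
    have hcont : ContinuousAt (fun w => C w - δ - u₀ w) x := by
      have h1 : ContinuousAt u₀ x :=
        hu₀c.continuousAt (hΩ.mem_nhds (hVΩ hx.1))
      exact (hCc.continuousAt.sub continuousAt_const).sub h1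
    have hev : ∀ᶠ w in nhds x, 0 < C w - δ - u₀ w :=
      continuousAt_const.eventually_lt hcont (by linarith [hx.2])
    have hVn : V ∈ nhds x := hVo.mem_nhds hx.1
    filter_upwards [hev, hVn] with w hw1 hw2
    exact ⟨hw2, by linarith⟩
  -- closure O inequality
  have hclOineq : ∀ y ∈ closure O, u₀ y ≤ C y - δ := by
    have hOsub : O ⊆ closure V ∩ (fun w => C w - δ - u₀ w) ⁻¹' Ici 0 := by
      intro x hx
      exact ⟨subset_closure (hOsubV hx), by simp only [mem_preimage, mem_Ici]; linarith [hx.2]⟩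
    have hclosed : IsClosed (closure V ∩ (fun w => C w - δ - u₀ w) ⁻¹' Ici 0) := by
      have hcont : ContinuousOn (fun w => C w - δ - u₀ w) (closure V) := by
        apply ContinuousOn.sub
        · exact (hCc.sub continuous_const).continuousOn
        · exact hu₀c.mono hVcl
      exact ContinuousOn.preimage_isClosed_of_isClosed hcont isClosed_closure isClosed_Ici
    intro y hy
    have := (closure_minimal hOsub hclosed) hy
    have h2 := this.2
    simp only [mem_preimage, mem_Ici] at h2
    linarith
  have hclOV : closure O ⊆ V := by
    intro y hy
    by_contra hyV
    have hycl : y ∈ closure V := closure_mono hOsubV hy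
    have hyfr : y ∈ frontier (V \ {x₀}) :=
      subset_frontier_diff_singleton hv₀ hVo x₀ ⟨hycl, hyV⟩
    have h1 := hhyp y hyfr
    have h2 := hclOineq y hy
    simp only [hC] at h2
    linarith
  have hx₀O : x₀ ∉ closure O := by
    intro hx₀cl
    have hx₀V : x₀ ∈ V := hclOV hx₀cl
    have hx₀fr : x₀ ∈ frontier (V \ {x₀}) :=
      vertex_mem_frontier_diff_singleton hv₀ hVo hx₀V
    have h1 := hhyp x₀ hx₀fr
    have h2 := hclOineq x₀ hx₀cl
    simp only [hC, sub_self, norm_zero, mul_zero, zero_add] at h1 h2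
    linarith
  -- the bumped function
  set v' : Euc n → ℝ := fun x => if x ∈ V then max (u₀ x) (C x - δ) else u₀ x with hv'
  have hu₀v' : ∀ x, u₀ x ≤ v' x := by
    intro x
    simp only [hv']
    by_cases hxV : x ∈ V
    · rw [if_pos hxV]; exact le_max_left _ _
    · rw [if_neg hxV]
  have hv'Ψ : ∀ x, v' x ≤ Ψ x := by
    have hCΨ : ∀ x ∈ V, C x - δ ≤ Ψ x := by
      have := hΨb V hVo hVb hVcl x₀ a (b - δ) ?_
      · intro x hx
        have := this x hx
        simp only [hC]; linarith [this]
      · intro x hx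
        have h1 := hhyp x hx
        have h2 := hupp x
        linarith
    intro x
    simp only [hv']
    by_cases hxV : x ∈ V
    · rw [if_pos hxV]
      exact max_le (hupp x) (hCΨ x hxV)
    · rw [if_neg hxV]; exact hupp x
  have hv'a : CmpAbove Ω v' := by
    intro W hWo hWb hWcl y₀ a' b' hhyp' x hx
    have hu₀W : ∀ p ∈ W, u₀ p ≤ a' * ‖p - y₀‖ + b' := by
      refine hu₀a W hWo hWb hWcl y₀ a' b' ?_
      intro p hp
      exact le_trans (hu₀v' p) (hhyp' p hp)
    set WO : Set (Euc n) := W ∩ O with hWO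
    have hWOo : IsOpen WO := hWo.inter hOopen
    have hWOb : IsBounded WO := hWb.subset inter_subset_left
    have hx₀WO : x₀ ∉ closure WO :=
      fun hc => hx₀O (closure_mono inter_subset_right hc)
    have hfr' : ∀ p ∈ frontier (WO \ {y₀}), a * ‖p - x₀‖ + (b - δ) ≤ a' * ‖p - y₀‖ + b' := by
      intro p hp
      rw [(hWOo.sdiff isClosed_singleton).frontier_eq] at hp
      have hpcl : p ∈ closure WO := closure_mono diff_subset hp.1
      have hpclW : p ∈ closure W := closure_mono inter_subset_left hpcl
      have hpclO : p ∈ closure O := closure_mono inter_subset_right hpcl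
      have hpV : p ∈ V := hclOV hpclO
      have hCpv' : C p - δ ≤ v' p := by
        simp only [hv']; rw [if_pos hpV]; exact le_max_right _ _
      have hpnot : p ∉ WO \ {y₀} := hp.2
      by_cases hpW : p ∈ W
      · by_cases hpO : p ∈ O
        · -- then p = y₀ ∈ WO
          have hpy₀ : p = y₀ := by
            by_contra hne
            exact hpnot ⟨⟨hpW, hpO⟩, hne⟩
          subst hpy₀
          have hpfr : p ∈ frontier (W \ {p}) :=
            vertex_mem_frontier_diff_singleton hv₀ hWo hpW
          have h1 := hhyp' p hpfr
          simp only [hC] at hCpv' ⊢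
          linarith
        · -- p ∈ W, p ∉ O : equality case
          have h3 := hu₀W p hpW
          have h4 : ¬(u₀ p < C p - δ) := fun hc => hpO ⟨hpV, hc⟩
          push_neg at h4
          simp only [hC] at h4 ⊢
          linarith
      · -- p ∉ W : frontier of W
        have hpfr : p ∈ frontier (W \ {y₀}) :=
          subset_frontier_diff_singleton hv₀ hWo y₀ ⟨hpclW, hpW⟩
        have h1 := hhyp' p hpfr
        simp only [hC] at hCpv' ⊢
        linarith
    have hWOcone := cone_comparison hWOo hWOb hx₀WO y₀ a (b - δ) a' b' hfr'
    -- conclude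
    by_cases hxV : x ∈ V
    · simp only [hv']
      rw [if_pos hxV]
      refine max_le (hu₀W x hx) ?_
      by_cases hxO : x ∈ O
      · have := hWOcone x ⟨hx, hxO⟩
        simp only [hC]; linarith
      · have : ¬(u₀ x < C x - δ) := fun hc => hxO ⟨hxV, hc⟩
        push_neg at this
        simp only [hC] at this ⊢
        linarith [hu₀W x hx]
    · simp only [hv']
      rw [if_neg hxV]
      exact hu₀W x hx
  -- contradiction
  have hv'F : v' ∈ F := ⟨hv'a, hv'Ψ⟩
  have : v' z ≤ u₀ z := hvle v' hv'F z
  have hv'z : C z - δ ≤ v' z := by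
    simp only [hv']; rw [if_pos hz]; exact le_max_right _ _
  simp only [hδ] at hv'z
  linarith
lemma lam_norm_ineq (lam : ℝ) (x z : Euc n) : lam * ‖x‖ ≤ lam * ‖z‖ + |lam| * ‖x - z‖ := by
  have h1 : lam * ‖x‖ - lam * ‖z‖ = lam * (‖x‖ - ‖z‖) := by ring
  have h2 : lam * (‖x‖ - ‖z‖) ≤ |lam * (‖x‖ - ‖z‖)| := le_abs_self _
  have h3 : |lam * (‖x‖ - ‖z‖)| = |lam| * |‖x‖ - ‖z‖| := abs_mul _ _
  have h4 : |‖x‖ - ‖z‖| ≤ ‖x - z‖ := abs_norm_sub_norm_le x z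
  have h5 : |lam| * |‖x‖ - ‖z‖| ≤ |lam| * ‖x - z‖ :=
    mul_le_mul_of_nonneg_left h4 (abs_nonneg _)
  linarith


end PerronHelpers

/-- Theorem 2(i), existence: for any boundary data g and any λ there is an
exterior infinity harmonic function with u = g on ∂Ω and c⁻ + λ|x| ≤ u ≤ c⁺ + λ|x| in Ω. -/
theorem stmt12 {n : ℕ} (A : Set (Euc n)) (hAcl : IsClosed A) (hAbd : IsBounded A)
    (h0A : (0 : Euc n) ∈ A) (hA1 : A ⊆ ball 0 1)
    (g : Euc n → ℝ) (hg : ContinuousOn g (frontier Aᶜ)) (lam : ℝ) :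
    ∃ u : Euc n → ℝ, ContinuousOn u (closure Aᶜ) ∧ InfHarmonic Aᶜ u ∧
      (∀ x ∈ frontier Aᶜ, u x = g x) ∧
      ∀ x ∈ Aᶜ,
        sInf ((fun y => g y - lam * ‖y‖) '' frontier Aᶜ) + lam * ‖x‖ ≤ u x ∧
        u x ≤ sSup ((fun y => g y - lam * ‖y‖) '' frontier Aᶜ) + lam * ‖x‖ := by
  classical
  rcases eq_empty_or_nonempty Aᶜ with hAc | ⟨x₁, hx₁⟩
  · -- degenerate case
    refine ⟨g, ?_, ⟨?_, ?_⟩, ?_, ?_⟩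
    · rw [hAc, closure_empty]; exact continuousOn_empty g
    · intro V hVo hVb hVcl x₀ a b hhyp x hx
      exact absurd ((hAc ▸ hVcl) (subset_closure hx)) (notMem_empty x)
    · intro V hVo hVb hVcl x₀ a b hhyp x hx
      exact absurd ((hAc ▸ hVcl) (subset_closure hx)) (notMem_empty x)
    · intro x hx; rfl
    · intro x hx; exact absurd (hAc ▸ hx) (notMem_empty x)
  · -- main case
    have hΩo : IsOpen Aᶜ := hAcl.isOpen_compl
    have hv₀ : x₁ ≠ 0 := fun h => hx₁ (h ▸ h0A)
    have hFrA : frontier Aᶜ ⊆ A := by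
      rw [frontier_compl]
      exact hAcl.frontier_subset
    have h0Ω : (0 : Euc n) ∉ Aᶜ := fun h => h h0A
    have hFrcomp : IsCompact (frontier Aᶜ) :=
      Metric.isCompact_of_isClosed_isBounded isClosed_frontier (hAbd.subset hFrA)
    have hFrne : (frontier Aᶜ).Nonempty := by
      rw [frontier_compl]
      rw [nonempty_frontier_iff]
      constructor
      · exact ⟨0, h0A⟩
      · intro hu
        exact hx₁ (hu ▸ mem_univ x₁)
    -- constants
    set Fr : Set (Euc n) := frontier Aᶜ with hFr
    set cM : ℝ := sInf ((fun y => g y - lam * ‖y‖) '' Fr) with hcM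
    set cP : ℝ := sSup ((fun y => g y - lam * ‖y‖) '' Fr) with hcP
    have hglc : ContinuousOn (fun y => g y - lam * ‖y‖) Fr :=
      hg.sub ((continuous_const.mul continuous_norm).continuousOn)
    have hKcomp : IsCompact ((fun y => g y - lam * ‖y‖) '' Fr) :=
      hFrcomp.image_of_continuousOn hglc
    have hKne : ((fun y => g y - lam * ‖y‖) '' Fr).Nonempty := hFrne.image _
    have hcMle : ∀ y ∈ Fr, cM ≤ g y - lam * ‖y‖ :=
      fun y hy => csInf_le hKcomp.bddBelow (mem_image_of_mem _ hy)
    have hcPge : ∀ y ∈ Fr, g y - lam * ‖y‖ ≤ cP :=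
      fun y hy => le_csSup hKcomp.bddAbove (mem_image_of_mem _ hy)
    have hcMcP : cM ≤ cP := by
      obtain ⟨y, hy⟩ := hFrne
      exact le_trans (hcMle y hy) (hcPge y hy)
    -- bound on g
    obtain ⟨Mb, hMb⟩ : ∃ Mb, ∀ y ∈ Fr, |g y| ≤ Mb := by
      obtain ⟨Mb, hMb⟩ := hFrcomp.exists_bound_of_continuousOn hg
      exact ⟨Mb, fun y hy => hMb y hy⟩
    -- barrier slopes
    have hbar : ∀ z ∈ Fr, ∀ ε : ℝ, 0 < ε → ∃ L : ℝ, |lam| ≤ L ∧ 0 ≤ L ∧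
        (∀ y ∈ Fr, g z - ε - L * ‖y - z‖ ≤ g y) ∧
        (∀ y ∈ Fr, g y ≤ g z + ε + L * ‖y - z‖) := by
      intro z hz ε hε
      have hcw := hg z hz
      rw [Metric.continuousWithinAt_iff] at hcw
      obtain ⟨ρ, hρpos, hρ⟩ := hcw ε hε
      have hMbnn : 0 ≤ Mb := le_trans (abs_nonneg _) (hMb z hz)
      refine ⟨|lam| + 2 * Mb / ρ, by nlinarith [abs_nonneg lam, div_nonneg (by linarith : (0:ℝ) ≤ 2*Mb) hρpos.le], by positivity, ?_, ?_⟩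
      · intro y hy
        by_cases hcase : dist y z < ρ
        · have := hρ hy hcase
          rw [Real.dist_eq] at this
          have h1 : g z - g y < ε := by cases' abs_lt.1 this with h1 h2; linarith
          have h2 : 0 ≤ (|lam| + 2 * Mb / ρ) * ‖y - z‖ := by positivity
          linarith
        · push_neg at hcase
          rw [dist_eq_norm] at hcase
          have h1 : 2 * Mb ≤ (2 * Mb / ρ) * ‖y - z‖ := by
            rw [div_mul_eq_mul_div, le_div_iff₀ hρpos]
            have := mul_le_mul_of_nonneg_left hcase (by positivity : (0:ℝ) ≤ 2 * Mb)
            linarith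
          have h2 : (2 * Mb / ρ) * ‖y - z‖ ≤ (|lam| + 2 * Mb / ρ) * ‖y - z‖ := by
            apply mul_le_mul_of_nonneg_right _ (norm_nonneg _)
            linarith [abs_nonneg lam]
          have h3 : g z - g y ≤ 2 * Mb := by
            have ha := abs_le.1 (hMb z hz)
            have hb := abs_le.1 (hMb y hy)
            linarith [ha.1, ha.2, hb.1, hb.2]
          linarith
      · intro y hy
        by_cases hcase : dist y z < ρ
        · have := hρ hy hcase
          rw [Real.dist_eq] at this
          have h1 : g y - g z < ε := by cases' abs_lt.1 this with h1 h2; linarith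
          have h2 : 0 ≤ (|lam| + 2 * Mb / ρ) * ‖y - z‖ := by positivity
          linarith
        · push_neg at hcase
          rw [dist_eq_norm] at hcase
          have h1 : 2 * Mb ≤ (2 * Mb / ρ) * ‖y - z‖ := by
            rw [div_mul_eq_mul_div, le_div_iff₀ hρpos]
            have := mul_le_mul_of_nonneg_left hcase (by positivity : (0:ℝ) ≤ 2 * Mb)
            linarith
          have h2 : (2 * Mb / ρ) * ‖y - z‖ ≤ (|lam| + 2 * Mb / ρ) * ‖y - z‖ := by
            apply mul_le_mul_of_nonneg_right _ (norm_nonneg _)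
            linarith [abs_nonneg lam]
          have h3 : g y - g z ≤ 2 * Mb := by
            have ha := abs_le.1 (hMb z hz)
            have hb := abs_le.1 (hMb y hy)
            linarith [ha.1, ha.2, hb.1, hb.2]
          linarith
    -- the two global cones
    set w₀ : Euc n → ℝ := fun x => lam * ‖x - 0‖ + cM with hw₀def
    set w₁ : Euc n → ℝ := fun x => lam * ‖x - 0‖ + cP with hw₁def
    have hw₀c : Continuous w₀ := by fun_prop
    have hw₁c : Continuous w₁ := by fun_prop
    -- the upper cone family
    set Upper : Set (Euc n → ℝ) := insert w₁
      {w | ∃ z ∈ Fr, ∃ ε : ℝ, 0 < ε ∧ ∃ L : ℝ, |lam| ≤ L ∧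
        (∀ y ∈ Fr, g y ≤ g z + ε + L * ‖y - z‖) ∧
        w = fun x => L * ‖x - z‖ + (g z + ε)} with hUpper
    set Ψ : Euc n → ℝ := fun x => sInf ((fun w : Euc n → ℝ => w x) '' Upper) with hΨdef
    -- lower bound for all upper members
    have hUlow : ∀ w ∈ Upper, ∀ x, w₀ x ≤ w x := by
      intro w hw x
      rcases hw with hw | ⟨z, hz, ε, hε, L, hL, hdom, rfl⟩
      · rw [hw]
        simp only [hw₀def, hw₁def]
        linarith
      · simp only [hw₀def, sub_zero]
        have h1 : cM ≤ g z - lam * ‖z‖ := hcMle z hz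
        have h2 : lam * ‖x‖ ≤ lam * ‖z‖ + |lam| * ‖x - z‖ := lam_norm_ineq lam x z
        have h3 : |lam| * ‖x - z‖ ≤ L * ‖x - z‖ :=
          mul_le_mul_of_nonneg_right hL (norm_nonneg _)
        linarith
    have hUne : Upper.Nonempty := ⟨w₁, mem_insert _ _⟩
    have hΨbddB : ∀ x : Euc n, BddBelow ((fun w : Euc n → ℝ => w x) '' Upper) :=
      fun x => ⟨w₀ x, by rintro r ⟨w, hw, rfl⟩; exact hUlow w hw x⟩
    have hΨge : ∀ x, w₀ x ≤ Ψ x :=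
      fun x => le_csInf (hUne.image _) (by rintro r ⟨w, hw, rfl⟩; exact hUlow w hw x)
    have hΨlew : ∀ w ∈ Upper, ∀ x, Ψ x ≤ w x :=
      fun w hw x => csInf_le (hΨbddB x) (mem_image_of_mem _ hw)
    have hΨw₁ : ∀ x, Ψ x ≤ w₁ x := hΨlew w₁ (mem_insert _ _)
    -- Ψ is a supersolution
    have hΨb : CmpBelow Aᶜ Ψ := by
      apply cmpBelow_sInf hUne ?_ w₀ (fun w hw x => hUlow w hw x)
      intro w hw
      rcases hw with hw | ⟨z, hz, ε, hε, L, hL, hdom, rfl⟩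
      · rw [hw, hw₁def]
        exact cone_cmpBelow h0Ω lam cP
      · have hzA : z ∉ Aᶜ := fun hc => hc (hFrA hz)
        exact cone_cmpBelow hzA L (g z + ε)
    -- the Perron family and envelope
    set F : Set (Euc n → ℝ) := {v | CmpAbove Aᶜ v ∧ ∀ y, v y ≤ Ψ y} with hFdef
    set u₀ : Euc n → ℝ := fun x => sSup ((fun v : Euc n → ℝ => v x) '' F) with hu₀def
    have hw₀a : CmpAbove Aᶜ w₀ := by
      rw [hw₀def]; exact cone_cmpAbove h0Ω lam cM
    have hw₀F : w₀ ∈ F := ⟨hw₀a, hΨge⟩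
    have hFne : F.Nonempty := ⟨w₀, hw₀F⟩
    have hFa : ∀ v ∈ F, CmpAbove Aᶜ v := fun v hv => hv.1
    have hFbd : ∀ v ∈ F, ∀ x, v x ≤ Ψ x := fun v hv => hv.2
    have hbddA : ∀ x : Euc n, BddAbove ((fun v : Euc n → ℝ => v x) '' F) :=
      fun x => ⟨Ψ x, by rintro r ⟨v, hv, rfl⟩; exact hFbd v hv x⟩
    have hu₀low : ∀ v ∈ F, ∀ x, v x ≤ u₀ x :=
      fun v hv x => le_csSup (hbddA x) (mem_image_of_mem _ hv)
    have hu₀upp : ∀ x, u₀ x ≤ Ψ x :=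
      fun x => csSup_le (hFne.image _) (by rintro r ⟨v, hv, rfl⟩; exact hFbd v hv x)
    have hu₀a : CmpAbove Aᶜ u₀ := cmpAbove_sSup hFne hFa Ψ hFbd
    have hu₀b : CmpBelow Aᶜ u₀ :=
      perron_cmpBelow hΩo hv₀ hΨb hΨw₁ hw₁c hw₀c hw₀a hΨge
    have hu₀c : ContinuousOn u₀ Aᶜ :=
      perron_continuousOn hΩo hv₀ hFa hFbd hw₀F hΨw₁ hw₁c hw₀c
    -- lower barriers belong to F
    have hlowbar : ∀ z ∈ Fr, ∀ ε : ℝ, 0 < ε → ∃ L : ℝ, |lam| ≤ L ∧ 0 ≤ L ∧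
        (∀ x, g z - ε - L * ‖x - z‖ ≤ u₀ x) ∧ (∀ x, u₀ x ≤ g z + ε + L * ‖x - z‖) := by
      intro z hz ε hε
      obtain ⟨L, hLlam, hLnn, hdomlow, hdomup⟩ := hbar z hz ε hε
      refine ⟨L, hLlam, hLnn, ?_, ?_⟩
      · -- the lower cone is in F
        set lw : Euc n → ℝ := fun x => (-L) * ‖x - z‖ + (g z - ε) with hlw
        have hzA : z ∉ Aᶜ := fun hc => hc (hFrA hz)
        have hlwa : CmpAbove Aᶜ lw := cone_cmpAbove hzA (-L) (g z - ε)
        have hlwΨ : ∀ x, lw x ≤ Ψ x := by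
          intro x
          apply le_csInf (hUne.image _)
          rintro r ⟨w, hw, rfl⟩
          rcases hw with hw | ⟨z', hz', ε', hε', L', hL', hdom', rfl⟩
          · rw [hw, hw₁def]
            simp only [hlw, sub_zero]
            have h1 : g z - lam * ‖z‖ ≤ cP := hcPge z hz
            have h2 : lam * ‖z‖ ≤ lam * ‖x‖ + |lam| * ‖z - x‖ := lam_norm_ineq lam z x
            have h3 : |lam| * ‖z - x‖ ≤ L * ‖z - x‖ :=
              mul_le_mul_of_nonneg_right hLlam (norm_nonneg _)
            have h4 : ‖z - x‖ = ‖x - z‖ := norm_sub_rev z x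
            rw [h4] at h2 h3
            linarith
          · show (-L) * ‖x - z‖ + (g z - ε) ≤ L' * ‖x - z'‖ + (g z' + ε')
            have hL'nn : 0 ≤ L' := le_trans (abs_nonneg _) hL'
            rcases le_total L L' with hLL | hLL
            · have h1 := hdomlow z' hz'
              have htri : ‖z' - z‖ ≤ ‖x - z‖ + ‖x - z'‖ := by
                have := norm_sub_le_norm_sub_add_norm_sub z' x z
                rw [norm_sub_rev z' x] at this
                linarith [this]
              have h2 : L * ‖z' - z‖ ≤ L * (‖x - z‖ + ‖x - z'‖) :=
                mul_le_mul_of_nonneg_left htri hLnn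
              have h3 : L * ‖x - z'‖ ≤ L' * ‖x - z'‖ :=
                mul_le_mul_of_nonneg_right hLL (norm_nonneg _)
              nlinarith [h1, h2, h3]
            · have h1 := hdom' z hz
              have htri : ‖z - z'‖ ≤ ‖x - z‖ + ‖x - z'‖ := by
                have := norm_sub_le_norm_sub_add_norm_sub z x z'
                rw [norm_sub_rev z x] at this
                linarith [this]
              have h2 : L' * ‖z - z'‖ ≤ L' * (‖x - z‖ + ‖x - z'‖) :=
                mul_le_mul_of_nonneg_left htri hL'nn
              have h3 : L' * ‖x - z‖ ≤ L * ‖x - z‖ :=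
                mul_le_mul_of_nonneg_right hLL (norm_nonneg _)
              nlinarith [h1, h2, h3]
        have hlwF : lw ∈ F := ⟨hlwa, hlwΨ⟩
        intro x
        have := hu₀low lw hlwF x
        simp only [hlw] at this
        linarith
      · -- the upper cone dominates u₀
        intro x
        have hmem : (fun x => L * ‖x - z‖ + (g z + ε)) ∈ Upper := by
          right
          exact ⟨z, hz, ε, hε, L, hLlam, hdomup, rfl⟩
        have := le_trans (hu₀upp x) (hΨlew _ hmem x)
        linarith
    -- the final function
    set u : Euc n → ℝ := fun x => if x ∈ Aᶜ then u₀ x else g x with hudef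
    have huΩ : ∀ x ∈ Aᶜ, u x = u₀ x := fun x hx => if_pos hx
    have huFr : ∀ x ∈ Fr, u x = g x := by
      intro x hx
      have : x ∉ Aᶜ := fun hc => hc (hFrA hx)
      exact if_neg this
    have hclosureFr : closure Aᶜ \ Aᶜ ⊆ Fr := by
      intro x hx
      rw [hFr, frontier, hΩo.interior_eq]
      exact hx
    refine ⟨u, ?_, ⟨hu₀a.congr huΩ, hu₀b.congr huΩ⟩, huFr, ?_⟩
    · -- continuity on closure Aᶜ
      intro x hx
      by_cases hxΩ : x ∈ Aᶜ
      · have h1 : ContinuousAt u x := by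
          have h2 : ContinuousAt u₀ x := hu₀c.continuousAt (hΩo.mem_nhds hxΩ)
          apply h2.congr
          filter_upwards [hΩo.mem_nhds hxΩ] with y hy
          exact (huΩ y hy).symm
        exact h1.continuousWithinAt
      · have hxFr : x ∈ Fr := hclosureFr ⟨hx, hxΩ⟩
        rw [Metric.continuousWithinAt_iff]
        intro ε hε
        have hε4 : 0 < ε / 4 := by linarith
        obtain ⟨L, hLlam, hLnn, hlow', hup'⟩ := hlowbar x hxFr (ε / 4) hε4
        have hgc := hg x hxFr
        rw [Metric.continuousWithinAt_iff] at hgc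
        obtain ⟨ρg, hρgpos, hρg⟩ := hgc (ε / 4) hε4
        refine ⟨min ρg ((ε / 4) / (L + 1)), lt_min hρgpos (by positivity), ?_⟩
        intro y hy hdist
        have hd1 : dist y x < ρg := lt_of_lt_of_le hdist (min_le_left _ _)
        have hd2 : dist y x < (ε / 4) / (L + 1) := lt_of_lt_of_le hdist (min_le_right _ _)
        have hux : u x = g x := huFr x hxFr
        by_cases hyΩ : y ∈ Aᶜ
        · have huy : u y = u₀ y := huΩ y hyΩ
          have h1 := hlow' y
          have h2 := hup' y
          have h3 : L * ‖y - x‖ < ε / 4 := by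
            rw [← dist_eq_norm] at *
            calc L * dist y x ≤ (L + 1) * dist y x := by
                  nlinarith [dist_nonneg (x := y) (y := x)]
              _ < (L + 1) * ((ε / 4) / (L + 1)) := by
                  apply mul_lt_mul_of_pos_left hd2 (by linarith)
              _ = ε / 4 := by field_simp
          rw [huy, hux, Real.dist_eq]
          rw [abs_lt]
          constructor <;> nlinarith [h1, h2, h3]
        · have hyFr : y ∈ Fr := hclosureFr ⟨hy, hyΩ⟩
          have huy : u y = g y := huFr y hyFr
          rw [huy, hux]
          have := hρg hyFr hd1
          calc dist (g y) (g x) < ε / 4 := this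
            _ < ε := by linarith
    · -- the bounds
      intro x hx
      constructor
      · have h1 := hu₀low w₀ hw₀F x
        rw [huΩ x hx]
        simp only [hw₀def, sub_zero] at h1
        rw [hcM] at h1
        linarith
      · have h1 := le_trans (hu₀upp x) (hΨw₁ x)
        rw [huΩ x hx]
        simp only [hw₁def, sub_zero] at h1
        rw [hcP] at h1
        linarith
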